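/- (LASSO error bound) Let x ∈ R^n have support of size k, y = Ax + w with ‖Aᵀw‖_∞ ≤ κλσ for some κ ∈ (0,1), and let x̂ minimize (1/2)‖y − Az‖₂² + λσ‖z‖₁ over z ∈ R^n. If ρ_s(A) > 0 for s = 4k/(1−κ)², then ‖x̂ − x‖₂ ≤ ((1+κ)/(1−κ)) · 2√k λσ / ρ_s(A)². -/
import Mathlib


open Finset

noncomputable def l1norm {n : ℕ} (x : Fin n → ℝ) : ℝ := ∑ i, |x i|
noncomputable def l2norm {n : ℕ} (x : Fin n → ℝ) : ℝ := Real.sqrt (∑ i, (x i)^2)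
noncomputable def linfnorm {n : ℕ} (x : Fin n → ℝ) : ℝ := ⨆ i, |x i|

noncomputable def cmsv {m n : ℕ} (A : Matrix (Fin m) (Fin n) ℝ) (s : ℝ) : ℝ :=
  sInf {r | ∃ x : Fin n → ℝ, x ≠ 0 ∧ (l1norm x)^2 ≤ s * (l2norm x)^2 ∧
    r = l2norm (A.mulVec x) / l2norm x}

lemma sq_l2norm {n : ℕ} (v : Fin n → ℝ) : (l2norm v)^2 = ∑ i, (v i)^2 :=
  Real.sq_sqrt (Finset.sum_nonneg fun _ _ => sq_nonneg _)

lemma l2norm_nonneg {n : ℕ} (v : Fin n → ℝ) : 0 ≤ l2norm v := Real.sqrt_nonneg _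

set_option maxHeartbeats 1000000 in
theorem lasso_error_bound {m n k : ℕ} (A : Matrix (Fin m) (Fin n) ℝ)
    (x xhat : Fin n → ℝ) (w : Fin m → ℝ) (y : Fin m → ℝ) (lamsig κ : ℝ)
    (hls : 0 < lamsig) (hκ : κ ∈ Set.Ioo (0:ℝ) 1)
    (hk : (Finset.univ.filter fun i => x i ≠ 0).card = k)
    (hy : y = A.mulVec x + w)
    (hw : linfnorm (A.transpose.mulVec w) ≤ κ * lamsig)
    (hmin : ∀ z : Fin n → ℝ,
      (1/2) * (l2norm (y - A.mulVec xhat))^2 + lamsig * l1norm xhat ≤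
      (1/2) * (l2norm (y - A.mulVec z))^2 + lamsig * l1norm z)
    (hρ : 0 < cmsv A (4 * k / (1 - κ)^2)) :
    l2norm (xhat - x) ≤
      (1 + κ) / (1 - κ) * (2 * Real.sqrt k * lamsig / (cmsv A (4 * k / (1 - κ)^2))^2) := by
  obtain ⟨hκ0, hκ1⟩ := hκ
  have h1κ : (0:ℝ) < 1 - κ := by linarith
  have h2κ : (0:ℝ) < 1 + κ := by linarith
  set ρ := cmsv A (4 * k / (1 - κ)^2) with hρdef
  set h : Fin n → ℝ := xhat - x with hh
  have happ : ∀ i, h i = xhat i - x i := fun i => rfl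
  set T : Finset (Fin n) := univ.filter (fun i => x i ≠ 0) with hT
  set S1 := ∑ i ∈ T, |h i| with hS1def
  set S2 := ∑ i ∈ univ.filter (fun i => ¬ x i ≠ 0), |h i| with hS2def
  have hS1n : 0 ≤ S1 := Finset.sum_nonneg fun _ _ => abs_nonneg _
  have hS2n : 0 ≤ S2 := Finset.sum_nonneg fun _ _ => abs_nonneg _
  have hsplit : l1norm h = S1 + S2 := by
    rw [l1norm, hS1def, hS2def, hT]
    exact (Finset.sum_filter_add_sum_filter_not univ _ _).symm
  set E := ∑ i, (A.mulVec h i)^2 with hEdef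
  have hEn : 0 ≤ E := Finset.sum_nonneg fun _ _ => sq_nonneg _
  -- optimality rewritten
  have e1 : y - A.mulVec x = w := by rw [hy]; abel
  have hAh : A.mulVec h = A.mulVec xhat - A.mulVec x := Matrix.mulVec_sub A xhat x
  have e2 : y - A.mulVec xhat = w - A.mulVec h := by rw [hy, hAh]; abel
  have q1 : (l2norm (w - A.mulVec h))^2
      = ∑ i, (w i)^2 - 2*(∑ i, w i * A.mulVec h i) + E := by
    rw [sq_l2norm, hEdef]
    have : ∀ i, (w i - A.mulVec h i)^2
        = (w i)^2 - 2*(w i * A.mulVec h i) + (A.mulVec h i)^2 := fun i => by ring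
    simp only [Pi.sub_apply, this]
    rw [Finset.sum_add_distrib, Finset.sum_sub_distrib, Finset.mul_sum]
  have ineqA : (1/2)*E ≤ (∑ i, w i * A.mulVec h i) + lamsig*(l1norm x - l1norm xhat) := by
    have := hmin x
    rw [e1, e2, q1, sq_l2norm w] at this
    linarith
  -- swap the inner product
  have hswap : ∑ i, w i * A.mulVec h i = ∑ j, (A.transpose.mulVec w) j * h j := by
    simp only [Matrix.mulVec, dotProduct, Matrix.transpose_apply, Finset.mul_sum,
      Finset.sum_mul]
    rw [Finset.sum_comm]
    exact Finset.sum_congr rfl fun j _ => Finset.sum_congr rfl fun i _ => by ring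
  -- bound the inner product
  have hC : ∑ j, (A.transpose.mulVec w) j * h j ≤ κ*lamsig*(S1+S2) := by
    have hw' : (⨆ j, |A.transpose.mulVec w j|) ≤ κ * lamsig := hw
    have hbound : ∀ j, |(A.transpose.mulVec w) j| ≤ κ*lamsig := fun j =>
      le_trans (le_ciSup (Set.Finite.bddAbove (Set.finite_range fun j => |A.transpose.mulVec w j|)) j) hw'
    calc ∑ j, (A.transpose.mulVec w) j * h j
        ≤ ∑ j, |(A.transpose.mulVec w) j * h j| :=
          Finset.sum_le_sum fun j _ => le_abs_self _
      _ = ∑ j, |(A.transpose.mulVec w) j| * |h j| := by simp [abs_mul]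
      _ ≤ ∑ j, (κ*lamsig) * |h j| :=
          Finset.sum_le_sum fun j _ => mul_le_mul_of_nonneg_right (hbound j) (abs_nonneg _)
      _ = κ*lamsig * ∑ j, |h j| := by rw [Finset.mul_sum]
      _ = κ*lamsig*(S1+S2) := by rw [← hsplit]; rfl
  -- support decomposition bound
  have hD : l1norm x - l1norm xhat ≤ S1 - S2 := by
    have hx1 : l1norm x = ∑ i ∈ T, |x i| + ∑ i ∈ univ.filter (fun i => ¬ x i ≠ 0), |x i| := by
      rw [l1norm, hT]; exact (Finset.sum_filter_add_sum_filter_not univ _ _).symm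
    have hx2 : l1norm xhat
        = ∑ i ∈ T, |xhat i| + ∑ i ∈ univ.filter (fun i => ¬ x i ≠ 0), |xhat i| := by
      rw [l1norm, hT]; exact (Finset.sum_filter_add_sum_filter_not univ _ _).symm
    have hTc0 : ∑ i ∈ univ.filter (fun i => ¬ x i ≠ 0), |x i| = 0 := by
      apply Finset.sum_eq_zero
      intro i hi
      simp only [Finset.mem_filter, not_not] at hi
      simp [hi.2]
    have hTc : ∑ i ∈ univ.filter (fun i => ¬ x i ≠ 0), |xhat i| = S2 := by
      rw [hS2def]
      apply Finset.sum_congr rfl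
      intro i hi
      simp only [Finset.mem_filter, not_not] at hi
      rw [happ i, hi.2, sub_zero]
    have hTb : ∑ i ∈ T, |x i| - ∑ i ∈ T, |xhat i| ≤ S1 := by
      rw [hS1def, ← Finset.sum_sub_distrib]
      apply Finset.sum_le_sum
      intro i _
      have := abs_sub_abs_le_abs_sub (x i) (xhat i)
      have h2 : |x i - xhat i| = |h i| := by rw [happ i, abs_sub_comm]
      linarith
    rw [hx1, hx2, hTc0, hTc]
    linarith
  -- master inequality
  have key : (1/2)*E ≤ lamsig*((1+κ)*S1 - (1-κ)*S2) := by
    rw [hswap] at ineqA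
    have hD' := mul_le_mul_of_nonneg_left hD hls.le
    nlinarith [hC]
  have hS2le : (1-κ)*S2 ≤ (1+κ)*S1 := by nlinarith [key, hEn, hls]
  -- Cauchy–Schwarz
  set N := l2norm h with hNdef
  have hNn : 0 ≤ N := l2norm_nonneg h
  have hN2 : N^2 = ∑ i, (h i)^2 := sq_l2norm h
  have hcs : S1^2 ≤ (k:ℝ) * N^2 := by
    have hcs0 := Finset.sum_mul_sq_le_sq_mul_sq T (fun _ => (1:ℝ)) (fun i => |h i|)
    have hcard : ((T.card : ℝ)) = (k:ℝ) := by rw [hT, hk]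
    have hsub : ∑ i ∈ T, (h i)^2 ≤ ∑ i, (h i)^2 :=
      Finset.sum_le_sum_of_subset_of_nonneg (Finset.subset_univ T) fun i _ _ => sq_nonneg _
    simp only [one_mul, one_pow, sq_abs, Finset.sum_const, nsmul_eq_mul, mul_one] at hcs0
    rw [hN2]
    calc S1^2 ≤ (T.card : ℝ) * ∑ i ∈ T, (h i)^2 := hcs0
      _ ≤ (k:ℝ) * ∑ i, (h i)^2 := by
          rw [hcard]
          exact mul_le_mul_of_nonneg_left hsub (Nat.cast_nonneg k)
  have hS1N : S1 ≤ Real.sqrt k * N := by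
    have h1 : S1 ≤ Real.sqrt ((k:ℝ) * N^2) := by
      rw [← Real.sqrt_sq hS1n]
      exact Real.sqrt_le_sqrt hcs
    rwa [Real.sqrt_mul (Nat.cast_nonneg k), Real.sqrt_sq hNn] at h1
  clear_value S1 S2 E N T h ρ
  -- case h = 0
  by_cases hhz : h = 0
  · have hN0 : N = 0 := by
      rw [hNdef, hhz, l2norm]
      simp
    rw [hN0]
    have hρ2 : (0:ℝ) < ρ^2 := pow_pos hρ 2
    apply mul_nonneg (le_of_lt (div_pos h2κ h1κ))
    apply div_nonneg _ hρ2.le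
    positivity
  · -- h ≠ 0
    have hiex : ∃ i, h i ≠ 0 := Function.ne_iff.mp hhz
    obtain ⟨i0, hi0⟩ := hiex
    have hNpos : 0 < N := by
      rw [hNdef, l2norm]
      apply Real.sqrt_pos.mpr
      apply Finset.sum_pos' (fun i _ => sq_nonneg _) ⟨i0, Finset.mem_univ i0, ?_⟩
      exact lt_of_le_of_ne (sq_nonneg _) (Ne.symm (pow_ne_zero 2 hi0))
    have hfeas : (l1norm h)^2 ≤ (4 * (k:ℝ) / (1 - κ)^2) * (l2norm h)^2 := by
      rw [hsplit, ← hNdef, div_mul_eq_mul_div, le_div_iff₀ (by positivity : (0:ℝ) < (1-κ)^2)]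
      have hA : (1-κ)*(S1+S2) ≤ 2*S1 := by nlinarith
      have hB : 0 ≤ (1-κ)*(S1+S2) := mul_nonneg h1κ.le (add_nonneg hS1n hS2n)
      nlinarith [mul_self_le_mul_self hB hA, hcs]
    have hbdd : BddBelow {r | ∃ z : Fin n → ℝ, z ≠ 0 ∧ (l1norm z)^2 ≤ (4 * (k:ℝ) / (1 - κ)^2) * (l2norm z)^2 ∧
        r = l2norm (A.mulVec z) / l2norm z} := by
      refine ⟨0, ?_⟩
      rintro r ⟨z, _, _, rfl⟩
      exact div_nonneg (l2norm_nonneg _) (l2norm_nonneg _)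
    have hmem : l2norm (A.mulVec h) / N ∈ {r | ∃ z : Fin n → ℝ, z ≠ 0 ∧ (l1norm z)^2 ≤ (4 * (k:ℝ) / (1 - κ)^2) * (l2norm z)^2 ∧
        r = l2norm (A.mulVec z) / l2norm z} := ⟨h, hhz, hfeas, by rw [hNdef]⟩
    have hρle : ρ ≤ l2norm (A.mulVec h) / N := by
      rw [hρdef, cmsv]
      exact csInf_le hbdd hmem
    have hρN : ρ * N ≤ l2norm (A.mulVec h) := (le_div_iff₀ hNpos).mp hρle
    have hE : ρ^2 * N^2 ≤ E := by
      have h2 : (ρ*N)^2 ≤ (l2norm (A.mulVec h))^2 :=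
        pow_le_pow_left₀ (mul_nonneg hρ.le hNn) hρN 2
      rw [sq_l2norm, ← hEdef] at h2
      nlinarith [h2]
    have hsqk : 0 ≤ Real.sqrt k := Real.sqrt_nonneg _
    have t1 : lamsig*((1+κ)*S1 - (1-κ)*S2) ≤ lamsig*(1+κ)*(Real.sqrt k * N) := by
      nlinarith [mul_le_mul_of_nonneg_left hS1N (mul_nonneg hls.le h2κ.le),
        mul_nonneg (mul_nonneg hls.le h1κ.le) hS2n]
    have hfin : ρ^2 * N ≤ 2*(1+κ)*Real.sqrt k * lamsig := by
      have hmul : (ρ^2*N)*N ≤ (2*(1+κ)*Real.sqrt k*lamsig)*N := by nlinarith [hE, key, t1]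
      exact le_of_mul_le_mul_right hmul hNpos
    have hρ2 : (0:ℝ) < ρ^2 := pow_pos hρ 2
    have step1 : N ≤ 2*(1+κ)*Real.sqrt k*lamsig/ρ^2 := by
      rw [le_div_iff₀ hρ2]
      nlinarith [hfin]
    have hfrac : (1+κ) ≤ (1+κ)/(1-κ) := by
      rw [le_div_iff₀ h1κ, show (1+κ)*(1-κ) = 1 - κ^2 by ring]
      linarith [sq_nonneg κ]
    have h2' : 0 ≤ 2*Real.sqrt k*lamsig/ρ^2 :=
      div_nonneg (mul_nonneg (mul_nonneg (by norm_num) hsqk) hls.le) (sq_nonneg ρ)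
    have hlast : (1+κ) * (2*Real.sqrt k*lamsig/ρ^2) ≤ (1+κ)/(1-κ) * (2*Real.sqrt k*lamsig/ρ^2) :=
      mul_le_mul_of_nonneg_right hfrac h2'
    have hstep1' : N ≤ (1+κ) * (2*Real.sqrt k*lamsig/ρ^2) := by
      rw [show (1+κ) * (2*Real.sqrt k*lamsig/ρ^2) = 2*(1+κ)*Real.sqrt k*lamsig/ρ^2 by ring]
      exact step1
    exact hstep1'.trans hlast
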